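/- Let (M, cl) be a pregeometry with trivial closure, meaning cl(A) = ⋃_{a ∈ A} cl({a}) for every subset A ⊆ M. Suppose a₁, …, a_n ∈ M and no a_i lies in cl(∅), and let {b₁, …, b_r} ⊆ {a₁, …, a_n} be a basis for {a₁, …, a_n} (an independent subset whose closure contains all a_i). Then for each j there is a unique i ≤ r with a_j ∈ cl({b_i}). -/
import Mathlib


/-- A pregeometry (matroid closure operator) on a set `M`. -/
structure Pregeometry (M : Type*) where
  cl : Set M → Set M
  subset_cl : ∀ A : Set M, A ⊆ cl A
  mono : ∀ A B : Set M, A ⊆ B → cl A ⊆ cl B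
  idem : ∀ A : Set M, cl (cl A) = cl A
  finChar : ∀ (A : Set M) (x : M), x ∈ cl A → ∃ F : Finset M, ↑F ⊆ A ∧ x ∈ cl ↑F
  exchange : ∀ (A : Set M) (a b : M),
    a ∈ cl (A ∪ {b}) → a ∉ cl A → b ∈ cl (A ∪ {a})

/-- In a trivial pregeometry, each element of a finite set not lying in cl(∅)
is in the closure of a unique element of any basis of that set. -/
theorem trivial_pregeometry_unique_basis_element {M : Type*} (P : Pregeometry M)
    (htriv : ∀ A : Set M, P.cl A = ⋃ a ∈ A, P.cl {a})
    {n : ℕ} (a : Fin n → M) (ha : ∀ j, a j ∉ P.cl ∅)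
    (B : Set M) (hBsub : B ⊆ Set.range a)
    (hBind : ∀ x ∈ B, x ∉ P.cl (B \ {x}))
    (hBspan : Set.range a ⊆ P.cl B) :
    ∀ j, ∃! x, x ∈ B ∧ a j ∈ P.cl {x} := by
  intro j
  have hj : a j ∈ P.cl B := hBspan ⟨j, rfl⟩
  rw [htriv] at hj
  simp only [Set.mem_iUnion] at hj
  obtain ⟨x, hxB, hx⟩ := hj
  refine ⟨x, ⟨hxB, hx⟩, ?_⟩
  rintro y ⟨hyB, hy⟩
  by_contra hne
  -- exchange: a j ∈ cl {y} = cl (∅ ∪ {y}), a j ∉ cl ∅ ⇒ y ∈ cl {a j}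
  have hyc : y ∈ P.cl {a j} := by
    have := P.exchange ∅ (a j) y (by simpa using hy) (ha j)
    simpa using this
  have hclj : P.cl {a j} ⊆ P.cl {x} := by
    have h1 : ({a j} : Set M) ⊆ P.cl {x} := by
      intro z hz; rw [Set.mem_singleton_iff] at hz; subst hz; exact hx
    have := P.mono _ _ h1
    rwa [P.idem] at this
  have hxin : x ∈ (B \ {y} : Set M) := ⟨hxB, fun h => hne (Set.mem_singleton_iff.mp h).symm⟩
  exact hBind y hyB (P.mono {x} (B \ {y}) (by simpa using hxin) (hclj hyc))
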